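/- (All learners fail on some task for small samples.) Let X be a set, ρ a probability measure on X, and H a set of at least two hypotheses (functions X → {0,1}). Let p = inf over pairs of distinct h, h' ∈ H of P(h(X) ≠ h'(X)) where X ~ ρ, and assume p > 0. Then for any natural number n with n ≤ 1/(2p) and any learner A mapping labeled datasets in (X × {0,1})^n to hypotheses, there exists h* ∈ H such that, when X_1,…,X_n are drawn i.i.d. from ρ and D_{h*} = ((X_1,h*(X_1)),…,(X_n,h*(X_n))), the probability that A(D_{h*}) ≠ h* is at least 1/4. -/

import Mathlib

open MeasureTheory ENNReal

section Aux

variable {X : Type*} [MeasurableSpace X] (ρ : Measure X) [IsProbabilityMeasure ρ]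
  {n : ℕ} (A : (Fin n → X × Bool) → (X → Bool))

/-- The pair argument: if two distinct hypotheses have disagreement probability `d` with
`n * d ≤ 1/2`, then the learner fails on one of them with probability at least `1/4`. -/
lemma pair_lower_bound (h h' : X → Bool) (hne : h ≠ h')
    (hd : (n : ℝ≥0∞) * ρ {x | h x ≠ h' x} ≤ 1 / 2)
    (h1 : (Measure.pi fun _ : Fin n => ρ) {ω | A (fun i => (ω i, h (ω i))) ≠ h} < 1 / 4)
    (h2 : (Measure.pi fun _ : Fin n => ρ) {ω | A (fun i => (ω i, h' (ω i))) ≠ h'} < 1 / 4) :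
    False := by
  classical
  set μ : Measure (Fin n → X) := Measure.pi fun _ : Fin n => ρ with hμdef
  set D : Set X := {x | h x ≠ h' x} with hD
  set D' : Set X := toMeasurable ρ D with hD'
  set G : Set (Fin n → X) := {ω | ∀ i, ω i ∉ D'} with hG
  -- the complement of G has measure at most n * ρ D
  have hGc : μ Gᶜ ≤ (n : ℝ≥0∞) * ρ D := by
    have hGceq : Gᶜ = ⋃ i : Fin n, Function.eval i ⁻¹' D' := by
      ext ω
      simp [hG, Function.eval]
    have hfiber : ∀ i : Fin n, μ (Function.eval i ⁻¹' D') = ρ D' := by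
      intro i
      rw [Set.eval_preimage, hμdef, Measure.pi_pi]
      rw [Fintype.prod_eq_single i]
      · simp
      · intro j hj
        simp [Function.update_of_ne hj]
    calc μ Gᶜ = μ (⋃ i : Fin n, Function.eval i ⁻¹' D') := by rw [hGceq]
      _ ≤ ∑ i : Fin n, μ (Function.eval i ⁻¹' D') := measure_iUnion_fintype_le μ _
      _ = ∑ i : Fin n, ρ D' := by simp [hfiber]
      _ = (n : ℝ≥0∞) * ρ D' := by simp [mul_comm]
      _ = (n : ℝ≥0∞) * ρ D := by rw [hD', measure_toMeasurable]
  -- G is contained in the union of the two failure sets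
  have hsub : G ⊆ {ω | A (fun i => (ω i, h (ω i))) ≠ h} ∪
      {ω | A (fun i => (ω i, h' (ω i))) ≠ h'} := by
    intro ω hω
    have hdata : (fun i => (ω i, h (ω i))) = fun i => (ω i, h' (ω i)) := by
      funext i
      have : ω i ∉ D := fun hmem => hω i (subset_toMeasurable ρ D hmem)
      have : h (ω i) = h' (ω i) := by simpa [hD] using this
      simp [this]
    by_contra hcon
    simp only [Set.mem_union, Set.mem_setOf_eq] at hcon
    push_neg at hcon
    obtain ⟨e1, e2⟩ := hcon
    exact hne (e1 ▸ hdata ▸ e2)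
  -- conclude
  have hGsmall : μ G < 1 / 2 := by
    calc μ G ≤ μ ({ω | A (fun i => (ω i, h (ω i))) ≠ h} ∪
        {ω | A (fun i => (ω i, h' (ω i))) ≠ h'}) := measure_mono hsub
      _ ≤ μ {ω | A (fun i => (ω i, h (ω i))) ≠ h} +
          μ {ω | A (fun i => (ω i, h' (ω i))) ≠ h'} := measure_union_le _ _
      _ < 1 / 4 + 1 / 4 := ENNReal.add_lt_add h1 h2
      _ = 1 / 2 := by
        rw [← ENNReal.add_div]
        norm_num
        rw [← one_div,
          ENNReal.div_eq_div_iff (by norm_num) (by norm_num) (by norm_num) (by norm_num)]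
        norm_num
  have hone : (1 : ℝ≥0∞) ≤ μ G + 1 / 2 := by
    calc (1 : ℝ≥0∞) = μ Set.univ := (measure_univ (μ := μ)).symm
      _ = μ (G ∪ Gᶜ) := by rw [Set.union_compl_self]
      _ ≤ μ G + μ Gᶜ := measure_union_le _ _
      _ ≤ μ G + (n : ℝ≥0∞) * ρ D := by gcongr
      _ ≤ μ G + 1 / 2 := by gcongr
  have : (1 : ℝ≥0∞) < 1 := by
    calc (1 : ℝ≥0∞) ≤ μ G + 1 / 2 := hone
      _ < 1 / 2 + 1 / 2 := ENNReal.add_lt_add_right (by norm_num) hGsmall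
      _ = 1 := by
        rw [← ENNReal.add_div]
        norm_num
        exact ENNReal.div_self (by norm_num) (by norm_num)
  exact absurd this (lt_irrefl _)

end Aux

/-- All learners fail on some task for small samples: if `p` is the infimum disagreement
probability over pairs of distinct hypotheses in `H` (with `p > 0`), then for any sample size
`n ≤ 1/(2p)` and any learner `A`, there is a labeling hypothesis `h ∈ H` on which `A` fails to
identify `h` with probability at least `1/4`. -/
theorem all_learners_fail_on_some_task
    {X : Type*} [MeasurableSpace X] (ρ : Measure X) [IsProbabilityMeasure ρ]
    (H : Set (X → Bool)) (hH : ∃ h ∈ H, ∃ h' ∈ H, h ≠ h')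
    (p : ℝ≥0∞)
    (hp : p = ⨅ (h : X → Bool) (_ : h ∈ H) (h' : X → Bool) (_ : h' ∈ H) (_ : h ≠ h'),
            ρ {x | h x ≠ h' x})
    (hp0 : 0 < p)
    (n : ℕ) (hn : (n : ℝ≥0∞) ≤ 1 / (2 * p))
    (A : (Fin n → X × Bool) → (X → Bool)) :
    ∃ h ∈ H,
      (Measure.pi fun _ : Fin n => ρ) {ω | A (fun i => (ω i, h (ω i))) ≠ h} ≥ 1 / 4 := by
  classical
  by_contra hcon
  push_neg at hcon
  -- hcon : ∀ h ∈ H, μ {...} < 1 / 4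
  set μ : Measure (Fin n → X) := Measure.pi fun _ : Fin n => ρ with hμdef
  rcases Set.finite_or_infinite H with hfin | hinf
  · -- finite case: the infimum is attained
    obtain ⟨a, haH, b, hbH, hab⟩ := hH
    -- p ≤ 1
    have hple : p ≤ 1 := by
      rw [hp]
      exact le_trans (iInf_le_of_le a (iInf_le_of_le haH (iInf_le_of_le b (iInf_le_of_le hbH
        (iInf_le_of_le hab le_rfl))))) prob_le_one
    -- n * p ≤ 1 / 2
    have hnp : (n : ℝ≥0∞) * p ≤ 1 / 2 := by
      have h2p : (2 : ℝ≥0∞) * p ≠ 0 := by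
        simp [hp0.ne']
      have h2p' : (2 : ℝ≥0∞) * p ≠ ⊤ := by
        refine ENNReal.mul_ne_top (by norm_num) ?_
        exact ne_top_of_le_ne_top one_ne_top hple
      have := (ENNReal.le_div_iff_mul_le (Or.inl h2p) (Or.inl h2p')).mp hn
      -- this : n * (2 * p) ≤ 1
      rw [ENNReal.le_div_iff_mul_le (Or.inl two_ne_zero) (Or.inl (by norm_num))]
      calc (n : ℝ≥0∞) * p * 2 = (n : ℝ≥0∞) * (2 * p) := by ring
        _ ≤ 1 := this
    -- the set of disagreement values
    set V : Set ℝ≥0∞ := (fun q : (X → Bool) × (X → Bool) => ρ {x | q.1 x ≠ q.2 x}) ''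
      {q | q.1 ∈ H ∧ q.2 ∈ H ∧ q.1 ≠ q.2} with hV
    have hVne : V.Nonempty := ⟨_, ⟨(a, b), ⟨haH, hbH, hab⟩, rfl⟩⟩
    have hVfin : V.Finite := by
      apply Set.Finite.image
      apply Set.Finite.subset (hfin.prod hfin)
      intro q hq
      exact ⟨hq.1, hq.2.1⟩
    have hmem := hVne.csInf_mem hVfin
    obtain ⟨⟨h, h'⟩, ⟨hhH, hh'H, hne⟩, hval⟩ := hmem
    have hval' : ρ {x | h x ≠ h' x} = sInf V := by simpa using hval
    have hdp : ρ {x | h x ≠ h' x} ≤ p := by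
      rw [hval', hp]
      refine le_iInf fun c => le_iInf fun hc => le_iInf fun c' => le_iInf fun hc' =>
        le_iInf fun hcc' => ?_
      exact csInf_le hVfin.bddBelow ⟨(c, c'), ⟨hc, hc', hcc'⟩, rfl⟩
    have hd : (n : ℝ≥0∞) * ρ {x | h x ≠ h' x} ≤ 1 / 2 :=
      le_trans (by gcongr) hnp
    exact pair_lower_bound ρ A h h' hne hd (hcon h hhH) (hcon h' hh'H)
  · -- infinite case: counting argument with 2^(n+1) hypotheses
    obtain ⟨s, hsH, hsfin, hscard⟩ := hinf.exists_subset_ncard_eq (2 ^ (n + 1))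
    set t : Finset (X → Bool) := hsfin.toFinset with ht
    have htH : ∀ g ∈ t, g ∈ H := by
      intro g hg
      exact hsH (hsfin.mem_toFinset.mp hg)
    have htcard : t.card = 2 ^ (n + 1) := by
      rw [ht, ← Set.ncard_eq_toFinset_card s hsfin]
      exact hscard
    -- measurable kernels of the success sets
    set K : (X → Bool) → Set (Fin n → X) :=
      fun g => (toMeasurable μ {ω | A (fun i => (ω i, g (ω i))) ≠ g})ᶜ with hK
    have hKmeas : ∀ g, MeasurableSet (K g) :=
      fun g => (measurableSet_toMeasurable _ _).compl
    have hKμ : ∀ g ∈ t, (3 : ℝ≥0∞) / 4 ≤ μ (K g) := by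
      intro g hg
      have hfail : μ {ω | A (fun i => (ω i, g (ω i))) ≠ g} < 1 / 4 := hcon g (htH g hg)
      have hcompl : μ (K g) = 1 - μ {ω | A (fun i => (ω i, g (ω i))) ≠ g} := by
        rw [hK]
        rw [measure_compl (measurableSet_toMeasurable _ _) (measure_ne_top μ _)]
        rw [measure_toMeasurable, measure_univ]
      rw [hcompl]
      calc (3 : ℝ≥0∞) / 4 = 1 - 1 / 4 := by
            refine (ENNReal.sub_eq_of_eq_add (by norm_num) ?_).symm
            rw [← ENNReal.add_div]
            norm_num
            exact (ENNReal.div_self (by norm_num) (by norm_num)).symm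
        _ ≤ 1 - μ {ω | A (fun i => (ω i, g (ω i))) ≠ g} :=
            tsub_le_tsub_left hfail.le 1
    -- pointwise: each ω is in at most 2^n of the sets K g
    have hpt : ∀ ω : Fin n → X,
        (∑ g ∈ t, (K g).indicator (1 : (Fin n → X) → ℝ≥0∞) ω) ≤ 2 ^ n := by
      intro ω
      have hcount : ∑ g ∈ t, (K g).indicator (1 : (Fin n → X) → ℝ≥0∞) ω
          = ((t.filter fun g => ω ∈ K g).card : ℝ≥0∞) := by
        rw [Finset.card_filter]
        push_cast
        apply Finset.sum_congr rfl
        intro g _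
        by_cases hωg : ω ∈ K g <;> simp [Set.indicator_apply, hωg]
      rw [hcount]
      have hinj : Set.InjOn (fun g : X → Bool => (fun i : Fin n => g (ω i)))
          ↑(t.filter fun g => ω ∈ K g) := by
        intro g hg g' hg' heq
        simp only [Finset.coe_filter, Set.mem_setOf_eq] at hg hg'
        have hgood : A (fun i => (ω i, g (ω i))) = g := by
          have := hg.2
          rw [hK] at this
          simp only [Set.mem_compl_iff] at this
          have hnotin : ω ∉ {ω | A (fun i => (ω i, g (ω i))) ≠ g} :=
            fun hmem => this (subset_toMeasurable _ _ hmem)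
          simpa using hnotin
        have hgood' : A (fun i => (ω i, g' (ω i))) = g' := by
          have := hg'.2
          rw [hK] at this
          simp only [Set.mem_compl_iff] at this
          have hnotin : ω ∉ {ω | A (fun i => (ω i, g' (ω i))) ≠ g'} :=
            fun hmem => this (subset_toMeasurable _ _ hmem)
          simpa using hnotin
        have hdata : (fun i => (ω i, g (ω i))) = fun i => (ω i, g' (ω i)) := by
          funext i
          have : g (ω i) = g' (ω i) := congrFun heq i
          simp [this]
        rw [← hgood, ← hgood', hdata]
      have hcard : (t.filter fun g => ω ∈ K g).card ≤ 2 ^ n := by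
        have := Finset.card_le_card_of_injOn (fun g : X → Bool => (fun i : Fin n => g (ω i)))
          (fun g _ => Finset.mem_univ _) hinj
        calc (t.filter fun g => ω ∈ K g).card ≤ (Finset.univ : Finset (Fin n → Bool)).card :=
              this
          _ = 2 ^ n := by simp [Finset.card_univ]
      exact_mod_cast Nat.cast_le.mpr hcard
    -- sum of the measures is at most 2^n
    have hsum : ∑ g ∈ t, μ (K g) ≤ 2 ^ n := by
      have heq : ∀ g ∈ t, μ (K g) = ∫⁻ ω, (K g).indicator (1 : (Fin n → X) → ℝ≥0∞) ω ∂μ := by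
        intro g _
        rw [lintegral_indicator_one (hKmeas g)]
      calc ∑ g ∈ t, μ (K g)
          = ∑ g ∈ t, ∫⁻ ω, (K g).indicator (1 : (Fin n → X) → ℝ≥0∞) ω ∂μ :=
            Finset.sum_congr rfl heq
        _ = ∫⁻ ω, ∑ g ∈ t, (K g).indicator (1 : (Fin n → X) → ℝ≥0∞) ω ∂μ :=
            (lintegral_finset_sum t fun g _ => measurable_one.indicator (hKmeas g)).symm
        _ ≤ ∫⁻ _, (2 : ℝ≥0∞) ^ n ∂μ := lintegral_mono hpt
        _ = 2 ^ n := by simp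
    -- but the sum is at least 2^(n+1) * (3/4) > 2^n
    have hlow : (2 : ℝ≥0∞) ^ (n + 1) * (3 / 4) ≤ ∑ g ∈ t, μ (K g) := by
      calc (2 : ℝ≥0∞) ^ (n + 1) * (3 / 4) = ∑ _g ∈ t, (3 : ℝ≥0∞) / 4 := by
            rw [Finset.sum_const, htcard]
            simp [mul_comm]
        _ ≤ ∑ g ∈ t, μ (K g) := Finset.sum_le_sum hKμ
    have hcontra : (2 : ℝ≥0∞) ^ n < 2 ^ (n + 1) * (3 / 4) := by
      have h32 : (2 : ℝ≥0∞) ^ (n + 1) * (3 / 4) = 2 ^ n * (3 / 2) := by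
        rw [pow_succ, mul_assoc]
        congr 1
        rw [← mul_div_assoc,
          ENNReal.div_eq_div_iff (by norm_num) (by norm_num) (by norm_num) (by norm_num)]
        norm_num
      rw [h32]
      nth_rewrite 1 [← mul_one ((2:ℝ≥0∞)^n)]
      refine ENNReal.mul_lt_mul_right (by positivity) (by simp) ?_
      rw [ENNReal.lt_div_iff_mul_lt (Or.inl (by norm_num)) (Or.inl (by norm_num))]
      norm_num
    exact absurd (le_trans hlow hsum) (not_le.mpr hcontra)
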